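/- arXiv:1712.10041 — 2 statements merged into one kernel-verified Lean document; each statement's English description precedes it below -/
import Mathlib

section
/- Let requests follow the Zipf law with parameter β > 1 on n contents and suppose the cache size M(n) and freshness parameter F(n) satisfy M(n) = ω(1) and F(n) = ω(1). Then the LP hit probability P_LP(n) = ∑_{i=1}^{M(n)} (F(n)-1)p_i² / (1+(F(n)-1)p_i) converges to 1 as n → ∞. -/
open Finset Filter

/-- Asymptotic optimality of the LP policy: with Zipf(β) requests, β > 1,
cache size M(n) = ω(1) (with M(n) ≤ n) and freshness parameter F(n) = ω(1),
the LP hit probability P_LP(n) = ∑_{i=1}^{M(n)} (F(n)-1)p_i²/(1+(F(n)-1)p_i)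
tends to 1 as n → ∞, where p_i = i^{-β}/∑_{j=1}^n j^{-β}. -/
theorem stmt_7 (β : ℝ) (hβ : 1 < β) (M F : ℕ → ℕ)
    (hMn : ∀ n, M n ≤ n)
    (hM : Tendsto M atTop atTop) (hF : Tendsto F atTop atTop) :
    Tendsto (fun n : ℕ =>
        ∑ i ∈ Icc 1 (M n),
          ((F n : ℝ) - 1) * ((i : ℝ) ^ (-β) / ∑ j ∈ Icc 1 n, (j : ℝ) ^ (-β)) ^ 2 /
            (1 + ((F n : ℝ) - 1) * ((i : ℝ) ^ (-β) / ∑ j ∈ Icc 1 n, (j : ℝ) ^ (-β))))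
      atTop (nhds 1) := by
  have hfnn : ∀ i : ℕ, (0:ℝ) ≤ (i : ℝ) ^ (-β) := fun i => Real.rpow_nonneg (Nat.cast_nonneg i) _
  have hsum : Summable (fun i : ℕ => (i : ℝ) ^ (-β)) :=
    Real.summable_nat_rpow.2 (by linarith)
  set L := ∑' i : ℕ, (i : ℝ) ^ (-β) with hLdef
  set Z : ℕ → ℝ := fun n => ∑ j ∈ Icc 1 n, (j : ℝ) ^ (-β) with hZdef
  have hZr : ∀ m, Z m = ∑ i ∈ range (m+1), (i : ℝ) ^ (-β) := by
    intro m
    refine Finset.sum_subset ?_ ?_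
    · intro x hx; simp only [mem_Icc, mem_range] at *; omega
    · intro x hx hx'
      have hx0 : x = 0 := by simp only [mem_Icc, mem_range] at hx hx'; omega
      subst hx0
      simp [Real.zero_rpow (by linarith : -β ≠ 0)]
  have hZle : ∀ m, Z m ≤ L := fun m => Summable.sum_le_tsum _ (fun i _ => hfnn i) hsum
  have hZL : Tendsto Z atTop (nhds L) := by
    have h1 : Tendsto (fun m => ∑ i ∈ range m, (i : ℝ) ^ (-β)) atTop (nhds L) :=
      hsum.hasSum.tendsto_sum_nat
    have := h1.comp (tendsto_add_atTop_nat 1)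
    refine Tendsto.congr (fun n => ?_) this
    simp [Function.comp, hZr]
  have hZ1 : ∀ n, 1 ≤ n → (1:ℝ) ≤ Z n := by
    intro n hn
    have h1mem : 1 ∈ Icc 1 n := by simp [hn]
    calc (1:ℝ) = (1:ℕ) ^ (-β) := by simp
      _ ≤ Z n := Finset.single_le_sum (fun i _ => hfnn i) h1mem
  have hL : (1:ℝ) ≤ L := ge_of_tendsto hZL (eventually_atTop.2 ⟨1, hZ1⟩)
  have hL0 : (0:ℝ) < L := by linarith
  have hA : Tendsto (fun n => Z (M n) / Z n) atTop (nhds 1) := by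
    have := (hZL.comp hM).div hZL (ne_of_gt hL0)
    exact (by simpa [div_self (ne_of_gt hL0)] using this : Tendsto (Z ∘ M / Z) atTop (nhds 1))
  -- the correction term B
  set B : ℕ → ℝ := fun n => ∑ i ∈ Icc 1 (M n),
      ((i:ℝ) ^ (-β) / Z n) / (1 + ((F n : ℝ) - 1) * ((i:ℝ) ^ (-β) / Z n)) with hBdef
  have hB : Tendsto B atTop (nhds 0) := by
    rw [Metric.tendsto_atTop]
    intro ε hε
    obtain ⟨K, hK⟩ := Metric.tendsto_atTop.1 hZL (ε/2) (by positivity)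
    have hKtail : L - Z K < ε/2 := by
      have h := hK K le_rfl
      rw [Real.dist_eq] at h
      have := abs_lt.1 h
      linarith [this.1]
    obtain ⟨N1, hN1⟩ := eventually_atTop.1 (tendsto_atTop.1 hF (⌈2*(K:ℝ)/ε⌉₊ + 2))
    obtain ⟨N2, hN2⟩ := eventually_atTop.1 (tendsto_atTop.1 hM K)
    refine ⟨max (max N1 N2) 1, fun n hn => ?_⟩
    have hn1 : 1 ≤ n := le_trans (le_max_right _ _) hn
    have hnN1 : N1 ≤ n := le_trans (le_trans (le_max_left _ _) (le_max_left _ _)) hn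
    have hnN2 : N2 ≤ n := le_trans (le_trans (le_max_right _ _) (le_max_left _ _)) hn
    have hMK : K ≤ M n := hN2 n hnN2
    have hZn1 : (1:ℝ) ≤ Z n := hZ1 n hn1
    have hZn0 : (0:ℝ) < Z n := by linarith
    set c : ℝ := (F n : ℝ) - 1 with hcdef
    have hFc : (⌈2*(K:ℝ)/ε⌉₊ + 2 : ℕ) ≤ F n := hN1 n hnN1
    have hFcr : (2*(K:ℝ)/ε) + 2 ≤ (F n : ℝ) := by
      have h1 : ((⌈2*(K:ℝ)/ε⌉₊ + 2 : ℕ) : ℝ) ≤ (F n : ℝ) := Nat.cast_le.2 hFc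
      have h2 : 2*(K:ℝ)/ε ≤ (⌈2*(K:ℝ)/ε⌉₊ : ℝ) := Nat.le_ceil _
      push_cast at h1
      linarith
    have hc1 : (1:ℝ) ≤ c := by
      have : (0:ℝ) ≤ 2*(K:ℝ)/ε := by positivity
      simp only [hcdef]; linarith
    have hc0 : (0:ℝ) < c := by linarith
    -- pointwise facts
    have hp : ∀ i : ℕ, (0:ℝ) ≤ (i:ℝ) ^ (-β) / Z n := fun i => div_nonneg (hfnn i) hZn0.le
    have hd : ∀ i : ℕ, (0:ℝ) < 1 + c * ((i:ℝ) ^ (-β) / Z n) := by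
      intro i
      have := mul_nonneg hc0.le (hp i)
      linarith
    have hg0 : ∀ i : ℕ, (0:ℝ) ≤ ((i:ℝ) ^ (-β) / Z n) / (1 + c * ((i:ℝ) ^ (-β) / Z n)) :=
      fun i => div_nonneg (hp i) (hd i).le
    have hgc : ∀ i : ℕ, ((i:ℝ) ^ (-β) / Z n) / (1 + c * ((i:ℝ) ^ (-β) / Z n)) ≤ 1 / c := by
      intro i
      rw [div_le_div_iff₀ (hd i) hc0]
      nlinarith [hp i, hd i]
    have hgp : ∀ i : ℕ, ((i:ℝ) ^ (-β) / Z n) / (1 + c * ((i:ℝ) ^ (-β) / Z n)) ≤ (i:ℝ) ^ (-β) := by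
      intro i
      have h1 : ((i:ℝ) ^ (-β) / Z n) / (1 + c * ((i:ℝ) ^ (-β) / Z n)) ≤ (i:ℝ) ^ (-β) / Z n :=
        div_le_self (hp i) (by nlinarith [mul_nonneg hc0.le (hp i)])
      have h2 : (i:ℝ) ^ (-β) / Z n ≤ (i:ℝ) ^ (-β) := div_le_self (hfnn i) hZn1
      linarith
    -- split the sum
    have hsplit : Icc 1 (M n) = Ioc 0 (M n) := by exact Finset.Icc_add_one_left_eq_Ioc 0 (M n)
    have hsum_split :
        (∑ i ∈ Ioc 0 K, ((i:ℝ) ^ (-β) / Z n) / (1 + c * ((i:ℝ) ^ (-β) / Z n))) +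
        (∑ i ∈ Ioc K (M n), ((i:ℝ) ^ (-β) / Z n) / (1 + c * ((i:ℝ) ^ (-β) / Z n))) =
        ∑ i ∈ Ioc 0 (M n), ((i:ℝ) ^ (-β) / Z n) / (1 + c * ((i:ℝ) ^ (-β) / Z n)) :=
      Finset.sum_Ioc_consecutive _ (Nat.zero_le K) hMK
    have hpart1 : (∑ i ∈ Ioc 0 K, ((i:ℝ) ^ (-β) / Z n) / (1 + c * ((i:ℝ) ^ (-β) / Z n))) ≤
        (K:ℝ) * (1/c) := by
      have := Finset.sum_le_card_nsmul (Ioc 0 K)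
        (fun i => ((i:ℝ) ^ (-β) / Z n) / (1 + c * ((i:ℝ) ^ (-β) / Z n))) (1/c)
        (fun i _ => hgc i)
      simpa [Nat.card_Ioc, nsmul_eq_mul] using this
    have hpart2 : (∑ i ∈ Ioc K (M n), ((i:ℝ) ^ (-β) / Z n) / (1 + c * ((i:ℝ) ^ (-β) / Z n))) ≤
        L - Z K := by
      have h1 : (∑ i ∈ Ioc K (M n), ((i:ℝ) ^ (-β) / Z n) / (1 + c * ((i:ℝ) ^ (-β) / Z n))) ≤
          ∑ i ∈ Ioc K (M n), (i:ℝ) ^ (-β) :=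
        Finset.sum_le_sum (fun i _ => hgp i)
      have hIoc : ∀ m : ℕ, (Icc 1 m : Finset ℕ) = Ioc 0 m := fun m => by
        exact Finset.Icc_add_one_left_eq_Ioc 0 m
      have h2 : Z K + (∑ i ∈ Ioc K (M n), (i:ℝ) ^ (-β)) = Z (M n) := by
        have h := Finset.sum_Ioc_consecutive (fun i : ℕ => (i:ℝ) ^ (-β)) (Nat.zero_le K) hMK
        simp only [hZdef, hIoc]
        exact h
      have h3 := hZle (M n)
      linarith
    have hK2 : (K:ℝ) * (1/c) < ε/2 := by
      rw [mul_one_div, div_lt_iff₀ hc0]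
      have h1 : ε * c ≥ ε * (2*(K:ℝ)/ε + 1) :=
        mul_le_mul_of_nonneg_left (by linarith) hε.le
      have h2 : ε * (2*(K:ℝ)/ε + 1) = 2*(K:ℝ) + ε := by
        field_simp
      nlinarith
    have hBn : B n < ε := by
      have : B n = (∑ i ∈ Ioc 0 K, ((i:ℝ) ^ (-β) / Z n) / (1 + c * ((i:ℝ) ^ (-β) / Z n))) +
          (∑ i ∈ Ioc K (M n), ((i:ℝ) ^ (-β) / Z n) / (1 + c * ((i:ℝ) ^ (-β) / Z n))) := by
        rw [hsum_split]; simp only [hBdef, hsplit, hcdef]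
      rw [this]
      linarith
    have hBn0 : 0 ≤ B n := Finset.sum_nonneg (fun i _ => hg0 i)
    rw [Real.dist_eq, sub_zero, abs_of_nonneg hBn0]
    exact hBn
  have hmain : Tendsto (fun n => Z (M n) / Z n - B n) atTop (nhds 1) := by
    simpa using hA.sub hB
  have alg : ∀ x cc : ℝ, 0 < 1 + cc * x → cc * x ^ 2 / (1 + cc * x) = x - x / (1 + cc * x) := by
    intro x cc h
    field_simp
    ring
  refine Tendsto.congr' ?_ hmain
  filter_upwards [tendsto_atTop.1 hF 1] with n hFn
  have hc0 : (0:ℝ) ≤ (F n : ℝ) - 1 := by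
    have : (1:ℝ) ≤ (F n : ℝ) := by exact_mod_cast hFn
    linarith
  have hZn0 : (0:ℝ) ≤ Z n := Finset.sum_nonneg (fun i _ => hfnn i)
  simp only [hBdef, hZdef]
  symm
  calc (∑ i ∈ Icc 1 (M n),
          ((F n : ℝ) - 1) * ((i : ℝ) ^ (-β) / ∑ j ∈ Icc 1 n, (j : ℝ) ^ (-β)) ^ 2 /
            (1 + ((F n : ℝ) - 1) * ((i : ℝ) ^ (-β) / ∑ j ∈ Icc 1 n, (j : ℝ) ^ (-β))))
      = ∑ i ∈ Icc 1 (M n),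
          (((i:ℝ) ^ (-β) / ∑ j ∈ Icc 1 n, (j : ℝ) ^ (-β)) -
            ((i:ℝ) ^ (-β) / ∑ j ∈ Icc 1 n, (j : ℝ) ^ (-β)) /
              (1 + ((F n : ℝ) - 1) * ((i:ℝ) ^ (-β) / ∑ j ∈ Icc 1 n, (j : ℝ) ^ (-β)))) := by
        refine Finset.sum_congr rfl (fun i _ => ?_)
        have hp : (0:ℝ) ≤ (i:ℝ) ^ (-β) / ∑ j ∈ Icc 1 n, (j : ℝ) ^ (-β) := by
          exact div_nonneg (hfnn i) hZn0
        exact alg _ _ (by nlinarith)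
    _ = (∑ j ∈ Icc 1 (M n), (j : ℝ) ^ (-β)) / (∑ j ∈ Icc 1 n, (j : ℝ) ^ (-β)) -
        ∑ i ∈ Icc 1 (M n),
          ((i:ℝ) ^ (-β) / ∑ j ∈ Icc 1 n, (j : ℝ) ^ (-β)) /
            (1 + ((F n : ℝ) - 1) * ((i:ℝ) ^ (-β) / ∑ j ∈ Icc 1 n, (j : ℝ) ^ (-β))) := by
        rw [Finset.sum_sub_distrib, Finset.sum_div]
end

section
/- Under the scaling M(n) = O(F(n)^{1/β}) with β > 1, the LP hit probability satisfies P_LP(n) ≥ 1 - (1/0.9)(M(n)^{1-β} - n^{1-β}) - M(n)/(F(n)-1), and hence 1 - P_LP(n) = O(M(n)^{1-β}). -/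
open Finset Filter Asymptotics

/-- Zipf probability p_i = i^{-β} / ∑_{j=1}^n j^{-β}. -/
noncomputable def zipfP (β : ℝ) (n i : ℕ) : ℝ :=
  (i : ℝ) ^ (-β) / ∑ j ∈ Icc 1 n, (j : ℝ) ^ (-β)

/-- LP hit probability with cache size M and freshness parameter F:
P_LP(n) = ∑_{i=1}^{M(n)} p_i − ∑_{i=1}^{M(n)} p_i/(1+(F(n)−1)p_i). -/
noncomputable def PLP (β : ℝ) (M F : ℕ → ℕ) (n : ℕ) : ℝ :=
  (∑ i ∈ Icc 1 (M n), zipfP β n i) -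
    ∑ i ∈ Icc 1 (M n), zipfP β n i / (1 + ((F n : ℝ) - 1) * zipfP β n i)

lemma zipf_anti {β : ℝ} (hβ : 0 < β) {x₀ : ℝ} (hx : 0 < x₀) (a : ℕ) :
    AntitoneOn (fun x : ℝ => x ^ (-β)) (Set.Icc x₀ (x₀ + a)) := by
  intro x hx1 y _ hxy
  exact Real.rpow_le_rpow_of_nonpos (lt_of_lt_of_le hx hx1.1) hxy (by linarith)

lemma zipf_integral {β : ℝ} (hβ : 1 < β) {a b : ℝ} (ha : 0 < a) (hab : a ≤ b) :
    ∫ x in a..b, x ^ (-β) = (a ^ (1 - β) - b ^ (1 - β)) / (β - 1) := by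
  have h0 : (0 : ℝ) ∉ Set.uIcc a b := by
    rw [Set.uIcc_of_le hab, Set.mem_Icc]
    push_neg
    intro h; linarith
  rw [integral_rpow (Or.inr ⟨by intro h; linarith, h0⟩)]
  have h1 : -β + 1 = 1 - β := by ring
  have h2 : (1 : ℝ) - β ≠ 0 := by intro h; linarith
  have h3 : β - 1 ≠ 0 := by intro h; linarith
  rw [h1, div_eq_div_iff h2 h3]
  ring

/-- tail sum bound: ∑_{i=m+1}^n i^{-β} ≤ (m^{1-β} - n^{1-β})/(β-1). -/
lemma zipf_tail_bound {β : ℝ} (hβ : 1 < β) {m n : ℕ} (hm : 1 ≤ m) (hmn : m ≤ n) :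
    ∑ i ∈ Icc (m + 1) n, (i : ℝ) ^ (-β) ≤
      ((m : ℝ) ^ (1 - β) - (n : ℝ) ^ (1 - β)) / (β - 1) := by
  have hm0 : (0 : ℝ) < (m : ℝ) := by exact_mod_cast hm
  have key := (zipf_anti (by linarith : (0:ℝ) < β) hm0 (n - m)).sum_le_integral
  have hcast : ((m : ℝ) + ((n - m : ℕ) : ℝ)) = (n : ℝ) := by
    rw [Nat.cast_sub hmn]; ring
  rw [hcast] at key
  have hLHS : ∑ i ∈ Icc (m + 1) n, (i : ℝ) ^ (-β) =
      ∑ i ∈ Finset.range (n - m), ((m : ℝ) + ((i + 1 : ℕ) : ℝ)) ^ (-β) := by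
    rw [← Finset.Ico_add_one_right_eq_Icc, Finset.sum_Ico_eq_sum_range]
    have : n + 1 - (m + 1) = n - m := by omega
    rw [this]
    refine Finset.sum_congr rfl fun i _ => ?_
    congr 1
    push_cast
    ring
  rw [hLHS]
  calc ∑ i ∈ Finset.range (n - m), ((m : ℝ) + ((i + 1 : ℕ) : ℝ)) ^ (-β)
      ≤ ∫ x in (m : ℝ)..(n : ℝ), x ^ (-β) := key
    _ = ((m : ℝ) ^ (1 - β) - (n : ℝ) ^ (1 - β)) / (β - 1) :=
        zipf_integral hβ hm0 (by exact_mod_cast hmn)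

/-- lower bound on the normalizing sum. -/
lemma zipf_sum_lower {β : ℝ} (hβ : 1 < β) (n : ℕ) :
    (1 - (1 + (n : ℝ)) ^ (1 - β)) / (β - 1) ≤ ∑ j ∈ Icc 1 n, (j : ℝ) ^ (-β) := by
  have key := (zipf_anti (by linarith : (0:ℝ) < β) one_pos n).integral_le_sum
  have hLHS : ∑ j ∈ Icc 1 n, (j : ℝ) ^ (-β) =
      ∑ i ∈ Finset.range n, ((1 : ℝ) + (i : ℕ)) ^ (-β) := by
    rw [← Finset.Ico_add_one_right_eq_Icc, Finset.sum_Ico_eq_sum_range]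
    have : n + 1 - 1 = n := by omega
    rw [this]
    refine Finset.sum_congr rfl fun i _ => ?_
    congr 1
    push_cast
    ring
  rw [hLHS]
  refine le_trans (le_of_eq ?_) key
  rw [zipf_integral hβ one_pos (le_add_of_nonneg_right (Nat.cast_nonneg n))]
  rw [Real.one_rpow]

/-- Under the scaling M(n) = O(F(n)^{1/β}) with β > 1, the LP hit probability
satisfies (for large n) P_LP(n) ≥ 1 − (1/0.9)(M(n)^{1-β} − n^{1-β}) − M(n)/(F(n)−1),
and hence 1 − P_LP(n) = O(M(n)^{1-β}). -/
theorem stmt_8 (β : ℝ) (hβ : 1 < β) (M F : ℕ → ℕ)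
    (hM1 : ∀ n, 1 ≤ M n) (hMn : ∀ n, M n ≤ n)
    (hF : Tendsto F atTop atTop) (hM : Tendsto M atTop atTop)
    (hMO : (fun n => (M n : ℝ)) =O[atTop] fun n => (F n : ℝ) ^ (1 / β)) :
    (∀ᶠ n in atTop,
        1 - (1 / 0.9) * ((M n : ℝ) ^ (1 - β) - (n : ℝ) ^ (1 - β)) -
            (M n : ℝ) / ((F n : ℝ) - 1) ≤ PLP β M F n) ∧
    (fun n => 1 - PLP β M F n) =O[atTop] fun n => (M n : ℝ) ^ (1 - β) := by
  have hβ0 : (0:ℝ) < β - 1 := by linarith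
  -- eventually the small-term: (1+n)^{1-β} < 0.1
  have htend : Tendsto (fun n : ℕ => (1 + (n : ℝ)) ^ (1 - β)) atTop (nhds 0) := by
    have h1 : Tendsto (fun x : ℝ => x ^ (-(β - 1))) atTop (nhds 0) :=
      tendsto_rpow_neg_atTop hβ0
    have h2 : Tendsto (fun n : ℕ => 1 + (n : ℝ)) atTop atTop :=
      tendsto_atTop_add_const_left _ 1 tendsto_natCast_atTop_atTop
    have h3 : (fun n : ℕ => (1 + (n : ℝ)) ^ (1 - β)) =
        ((fun x : ℝ => x ^ (-(β - 1))) ∘ fun n : ℕ => 1 + (n : ℝ)) := by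
      funext n
      show (1 + (n : ℝ)) ^ (1 - β) = (1 + (n : ℝ)) ^ (-(β - 1))
      congr 1
      ring
    rw [h3]
    exact h1.comp h2
  have hsmall : ∀ᶠ n : ℕ in atTop, (1 + (n : ℝ)) ^ (1 - β) < 0.1 :=
    Filter.Tendsto.eventually_lt_const (by norm_num : (0:ℝ) < 0.1) htend
  have hF2 : ∀ᶠ n in atTop, 2 ≤ F n := hF.eventually_ge_atTop 2
  -- the key eventual bound
  have Ev : ∀ᶠ n in atTop, 0 ≤ 1 - PLP β M F n ∧
      1 - PLP β M F n ≤ (1 / 0.9) * ((M n : ℝ) ^ (1 - β) - (n : ℝ) ^ (1 - β)) +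
        (M n : ℝ) / ((F n : ℝ) - 1) := by
    filter_upwards [hsmall, hF2, eventually_ge_atTop 1] with n hsm hf2 hn1
    set S := ∑ j ∈ Icc 1 n, (j : ℝ) ^ (-β) with hSdef
    have hS : 0.9 / (β - 1) ≤ S := by
      refine le_trans ?_ (zipf_sum_lower hβ n)
      gcongr
      linarith
    have hSpos : 0 < S := lt_of_lt_of_le (div_pos (by norm_num) hβ0) hS
    have hppos : ∀ i : ℕ, 1 ≤ i → 0 < zipfP β n i := by
      intro i hi
      have : (0:ℝ) < (i : ℝ) := by exact_mod_cast hi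
      exact div_pos (Real.rpow_pos_of_pos this _) hSpos
    have hpnonneg : ∀ i : ℕ, 0 ≤ zipfP β n i := by
      intro i
      exact div_nonneg (Real.rpow_nonneg (Nat.cast_nonneg i) _) hSpos.le
    have hIoc : ∀ a k : ℕ, Icc (a + 1) k = Ioc a k := fun a k => by
      ext x; simp only [Finset.mem_Icc, Finset.mem_Ioc]; omega
    -- total sum is 1
    have htotal : ∑ i ∈ Icc 1 n, zipfP β n i = 1 := by
      unfold zipfP
      rw [← Finset.sum_div, ← hSdef, div_self hSpos.ne']
    -- split
    have hsplit : (∑ i ∈ Icc 1 (M n), zipfP β n i) +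
        ∑ i ∈ Ioc (M n) n, zipfP β n i = 1 := by
      rw [← htotal, hIoc 0, show (1:ℕ) = 0 + 1 from rfl, hIoc 0]
      exact Finset.sum_Ioc_consecutive _ (Nat.zero_le _) (hMn n)
    -- tail bound
    have hMpos : (0:ℝ) < (M n : ℝ) := by exact_mod_cast hM1 n
    have hT : ∑ i ∈ Ioc (M n) n, zipfP β n i ≤
        (1 / 0.9) * ((M n : ℝ) ^ (1 - β) - (n : ℝ) ^ (1 - β)) := by
      have h1 : ∑ i ∈ Ioc (M n) n, zipfP β n i =
          (∑ i ∈ Ioc (M n) n, (i : ℝ) ^ (-β)) / S := by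
        unfold zipfP; rw [← Finset.sum_div]
      have h2 : ∑ i ∈ Ioc (M n) n, (i : ℝ) ^ (-β) ≤
          ((M n : ℝ) ^ (1 - β) - (n : ℝ) ^ (1 - β)) / (β - 1) := by
        rw [← hIoc]; exact zipf_tail_bound hβ (hM1 n) (hMn n)
      have hD : (0:ℝ) ≤ (M n : ℝ) ^ (1 - β) - (n : ℝ) ^ (1 - β) := by
        have := Real.rpow_le_rpow_of_nonpos hMpos
          (by exact_mod_cast hMn n : (M n : ℝ) ≤ (n : ℝ)) (by linarith : 1 - β ≤ 0)
        linarith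
      rw [h1]
      calc (∑ i ∈ Ioc (M n) n, (i : ℝ) ^ (-β)) / S
          ≤ (((M n : ℝ) ^ (1 - β) - (n : ℝ) ^ (1 - β)) / (β - 1)) / S := by gcongr
        _ = ((M n : ℝ) ^ (1 - β) - (n : ℝ) ^ (1 - β)) / ((β - 1) * S) := by
            rw [div_div]
        _ ≤ ((M n : ℝ) ^ (1 - β) - (n : ℝ) ^ (1 - β)) / 0.9 := by
            gcongr
            rw [div_le_iff₀ hβ0] at hS; linarith [hS]
        _ = (1 / 0.9) * ((M n : ℝ) ^ (1 - β) - (n : ℝ) ^ (1 - β)) := by ring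
    have hTnn : 0 ≤ ∑ i ∈ Ioc (M n) n, zipfP β n i :=
      Finset.sum_nonneg fun i _ => hpnonneg i
    -- second sum bounds
    have hF1 : (1:ℝ) ≤ (F n : ℝ) - 1 := by
      have : (2:ℝ) ≤ (F n : ℝ) := by exact_mod_cast hf2
      linarith
    have hBub : ∑ i ∈ Icc 1 (M n), zipfP β n i / (1 + ((F n : ℝ) - 1) * zipfP β n i) ≤
        (M n : ℝ) / ((F n : ℝ) - 1) := by
      have hterm : ∀ i ∈ Icc 1 (M n),
          zipfP β n i / (1 + ((F n : ℝ) - 1) * zipfP β n i) ≤ 1 / ((F n : ℝ) - 1) := by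
        intro i hi
        have hi1 : 1 ≤ i := (Finset.mem_Icc.mp hi).1
        have hp := hppos i hi1
        have hd : (0:ℝ) < ((F n : ℝ) - 1) * zipfP β n i := by positivity
        calc zipfP β n i / (1 + ((F n : ℝ) - 1) * zipfP β n i)
            ≤ zipfP β n i / (((F n : ℝ) - 1) * zipfP β n i) := by
              gcongr
              linarith
          _ = 1 / ((F n : ℝ) - 1) := by
              rw [mul_comm, ← div_div, div_self hp.ne']
      calc ∑ i ∈ Icc 1 (M n), zipfP β n i / (1 + ((F n : ℝ) - 1) * zipfP β n i)
          ≤ ∑ _i ∈ Icc 1 (M n), 1 / ((F n : ℝ) - 1) := Finset.sum_le_sum hterm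
        _ = (M n : ℝ) / ((F n : ℝ) - 1) := by
            rw [Finset.sum_const, Nat.card_Icc]
            simp only [nsmul_eq_mul]
            have : (M n + 1 - 1 : ℕ) = M n := by omega
            rw [this]
            ring
    have hBnn : 0 ≤ ∑ i ∈ Icc 1 (M n),
        zipfP β n i / (1 + ((F n : ℝ) - 1) * zipfP β n i) := by
      refine Finset.sum_nonneg fun i hi => ?_
      have hp := hppos i (Finset.mem_Icc.mp hi).1
      have : (0:ℝ) < 1 + ((F n : ℝ) - 1) * zipfP β n i := by nlinarith
      positivity
    have hkey : 1 - PLP β M F n = (∑ i ∈ Ioc (M n) n, zipfP β n i) +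
        ∑ i ∈ Icc 1 (M n), zipfP β n i / (1 + ((F n : ℝ) - 1) * zipfP β n i) := by
      unfold PLP
      linarith [hsplit]
    constructor
    · rw [hkey]; linarith
    · rw [hkey]; linarith
  constructor
  · filter_upwards [Ev] with n ⟨_, h2⟩
    linarith
  · -- Big-O part
    obtain ⟨c, hc, hbnd⟩ := hMO.exists_pos
    rw [isBigOWith_iff] at hbnd
    have hMF : ∀ᶠ n in atTop,
        (M n : ℝ) / ((F n : ℝ) - 1) ≤ (2 * c ^ β) * (M n : ℝ) ^ (1 - β) := by
      filter_upwards [hbnd, hF2] with n hb hf2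
      have hMpos : (0:ℝ) < (M n : ℝ) := by exact_mod_cast hM1 n
      have hFc : (2:ℝ) ≤ (F n : ℝ) := by exact_mod_cast hf2
      have hFnn : (0:ℝ) ≤ (F n : ℝ) := by positivity
      have hb' : (M n : ℝ) ≤ c * (F n : ℝ) ^ (1 / β) := by
        rw [Real.norm_eq_abs, Real.norm_eq_abs, abs_of_nonneg hMpos.le,
          abs_of_nonneg (Real.rpow_nonneg hFnn _)] at hb
        exact hb
      have hMb : (M n : ℝ) ^ β ≤ c ^ β * (F n : ℝ) := by
        have h1 : (M n : ℝ) ^ β ≤ (c * (F n : ℝ) ^ (1 / β)) ^ β :=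
          Real.rpow_le_rpow hMpos.le hb' (by linarith)
        have h2 : (c * (F n : ℝ) ^ (1 / β)) ^ β = c ^ β * (F n : ℝ) := by
          rw [Real.mul_rpow hc.le (Real.rpow_nonneg hFnn _),
            ← Real.rpow_mul hFnn, one_div_mul_cancel (by linarith : β ≠ 0),
            Real.rpow_one]
        rw [← h2]; exact h1
      have hFm1 : (0:ℝ) < (F n : ℝ) - 1 := by linarith
      have hsplit : (M n : ℝ) / ((F n : ℝ) - 1) =
          (M n : ℝ) ^ (1 - β) * ((M n : ℝ) ^ β / ((F n : ℝ) - 1)) := by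
        rw [mul_div_assoc']
        congr 1
        rw [← Real.rpow_add hMpos]
        norm_num
      rw [hsplit]
      have hstep : (M n : ℝ) ^ β / ((F n : ℝ) - 1) ≤ 2 * c ^ β := by
        rw [div_le_iff₀ hFm1]
        have hcb : (0:ℝ) ≤ c ^ β := Real.rpow_nonneg hc.le _
        nlinarith [hMb]
      calc (M n : ℝ) ^ (1 - β) * ((M n : ℝ) ^ β / ((F n : ℝ) - 1))
          ≤ (M n : ℝ) ^ (1 - β) * (2 * c ^ β) := by
            gcongr
        _ = (2 * c ^ β) * (M n : ℝ) ^ (1 - β) := by ring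
    rw [isBigO_iff]
    refine ⟨1 / 0.9 + 2 * c ^ β, ?_⟩
    filter_upwards [Ev, hMF, eventually_ge_atTop 1] with n ⟨h0, h1⟩ h2 hn1
    have hMpos : (0:ℝ) < (M n : ℝ) := by exact_mod_cast hM1 n
    have hnpos : (0:ℝ) < (n : ℝ) := by exact_mod_cast hn1
    have hnn : (0:ℝ) ≤ (n : ℝ) ^ (1 - β) := Real.rpow_nonneg hnpos.le _
    have hMr : (0:ℝ) ≤ (M n : ℝ) ^ (1 - β) := Real.rpow_nonneg hMpos.le _
    rw [Real.norm_eq_abs, Real.norm_eq_abs, abs_of_nonneg h0, abs_of_nonneg hMr]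
    nlinarith [h1, h2]
end
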